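/- For every t > 0, the exact Gaussian-approximation function satisfies 0 < φ(t) < 1; equivalently, 0 < (4πt)^{−1/2} ∫_ℝ tanh(z/2)·exp(−(z−t)²/(4t)) dz < 1. -/

import Mathlib

open MeasureTheory Real

lemma tanh_lt_one' (x : ℝ) : Real.tanh x < 1 := by
  rw [Real.tanh_eq_sinh_div_cosh, div_lt_one (Real.cosh_pos _)]
  nlinarith [Real.cosh_sub_sinh x, Real.exp_pos (-x)]

lemma neg_one_lt_tanh' (x : ℝ) : -1 < Real.tanh x := by
  rw [Real.tanh_eq_sinh_div_cosh, lt_div_iff₀ (Real.cosh_pos _)]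
  nlinarith [Real.sinh_add_cosh x, Real.exp_pos x]

lemma abs_tanh_le_one' (x : ℝ) : |Real.tanh x| ≤ 1 :=
  abs_le.2 ⟨(neg_one_lt_tanh' x).le, (tanh_lt_one' x).le⟩

lemma tanh_nonneg' {x : ℝ} (hx : 0 ≤ x) : 0 ≤ Real.tanh x := by
  rw [Real.tanh_eq_sinh_div_cosh]
  exact div_nonneg (by rwa [← Real.sinh_zero, Real.sinh_le_sinh]) (Real.cosh_pos _).le

lemma tanh_pos' {x : ℝ} (hx : 0 < x) : 0 < Real.tanh x := by
  rw [Real.tanh_eq_sinh_div_cosh]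
  exact div_pos (by rwa [← Real.sinh_zero, Real.sinh_lt_sinh]) (Real.cosh_pos _)

/-- The exact Gaussian-approximation check-node function for polar codes:
`φ(t) = 1 − (4πt)^{−1/2} ∫_ℝ tanh(z/2)·exp(−(z−t)²/(4t)) dz` for `t > 0`, with `φ(0) = 1`. -/
noncomputable def phiGA (t : ℝ) : ℝ :=
  if t = 0 then 1
  else 1 - (Real.sqrt (4 * Real.pi * t))⁻¹ *
    ∫ z : ℝ, Real.tanh (z / 2) * Real.exp (-(z - t) ^ 2 / (4 * t))

/-- for every `t > 0`, `0 < φ(t) < 1`; equivalently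
`0 < (4πt)^{−1/2} ∫_ℝ tanh(z/2)·exp(−(z−t)²/(4t)) dz < 1`. -/
theorem phiGA_mem_Ioo :
    ∀ t : ℝ, 0 < t →
      (0 < phiGA t ∧ phiGA t < 1) ∧
      (0 < (Real.sqrt (4 * Real.pi * t))⁻¹ *
            ∫ z : ℝ, Real.tanh (z / 2) * Real.exp (-(z - t) ^ 2 / (4 * t)) ∧
        (Real.sqrt (4 * Real.pi * t))⁻¹ *
            (∫ z : ℝ, Real.tanh (z / 2) * Real.exp (-(z - t) ^ 2 / (4 * t))) < 1) := by
  intro t ht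
  have hπ : 0 < Real.pi := Real.pi_pos
  have h4t : 0 < 4 * Real.pi * t := by positivity
  have hs : 0 < Real.sqrt (4 * Real.pi * t) := Real.sqrt_pos.mpr h4t
  have hc : 0 < (Real.sqrt (4 * Real.pi * t))⁻¹ := inv_pos.mpr hs
  set g : ℝ → ℝ := fun z => Real.exp (-(z - t) ^ 2 / (4 * t)) with hg
  set f : ℝ → ℝ := fun z => Real.tanh (z / 2) * g z with hf
  have hb : (0:ℝ) < (4 * t)⁻¹ := by positivity
  -- g integrable
  have hgrw : ∀ z : ℝ, g z = Real.exp (-(4*t)⁻¹ * (z - t) ^ 2) := by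
    intro z; simp only [hg]; ring_nf
  have hgi : Integrable g := by
    have h0 := (integrable_exp_neg_mul_sq hb).comp_sub_right t
    refine h0.congr ?_
    filter_upwards with z
    rw [hgrw z]
  have hgpos : ∀ z, 0 < g z := fun z => Real.exp_pos _
  -- integral of g
  have hgint : ∫ z, g z = Real.sqrt (4 * Real.pi * t) := by
    have h1 : ∫ z, g z = ∫ z, Real.exp (-(4*t)⁻¹ * (z - t) ^ 2) := by
      exact integral_congr_ae (Filter.Eventually.of_forall hgrw)
    rw [h1, integral_sub_right_eq_self (fun z => Real.exp (-(4*t)⁻¹ * z ^ 2)) t,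
      integral_gaussian]
    congr 1
    field_simp
  -- f measurable & integrable
  have hfc : Continuous f := by
    apply Continuous.mul
    · have h1 : Continuous Real.tanh := by
        have : Real.tanh = fun x => Real.sinh x / Real.cosh x := by
          funext x; exact Real.tanh_eq_sinh_div_cosh x
        rw [this]
        exact Real.continuous_sinh.div Real.continuous_cosh fun x => (Real.cosh_pos x).ne'
      exact h1.comp (continuous_id.div_const 2)
    · exact Real.continuous_exp.comp (by continuity)
  have hfi : Integrable f := by
    refine hgi.mono' hfc.aestronglyMeasurable ?_
    filter_upwards with z
    rw [hf, Real.norm_eq_abs]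
    simp only [abs_mul, abs_of_pos (hgpos z)]
    calc |Real.tanh (z/2)| * g z ≤ 1 * g z := by
          exact mul_le_mul_of_nonneg_right (abs_tanh_le_one' _) (hgpos z).le
      _ = g z := one_mul _
  -- Upper bound: ∫ f < ∫ g
  have hflt : ∫ z, f z < ∫ z, g z := by
    have hG : ∀ z, 0 < g z - f z := by
      intro z
      have h1 := tanh_lt_one' (z / 2)
      have h2 : f z = Real.tanh (z / 2) * g z := rfl
      nlinarith [hgpos z]
    have hGi : Integrable (fun z => g z - f z) := hgi.sub hfi
    have hpos : 0 < ∫ z, (g z - f z) := by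
      rw [integral_pos_iff_support_of_nonneg (fun z => (hG z).le) hGi]
      have : Function.support (fun z => g z - f z) = Set.univ := by
        ext z; simp [(hG z).ne']
      rw [this]
      simp
    have := integral_sub hgi hfi
    linarith [this ▸ hpos]
  -- Lower bound: 0 < ∫ f, via symmetrization
  have hfneg : Integrable (fun z => f (-z)) := hfi.comp_neg
  have hintneg : ∫ z, f (-z) = ∫ z, f z := integral_neg_eq_self f volume
  have hFnn : ∀ z, 0 ≤ f z + f (-z) := by
    intro z
    have hodd : Real.tanh (-z / 2) = -Real.tanh (z / 2) := by
      rw [neg_div, Real.tanh_neg]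
    have hexp : f z + f (-z) = Real.tanh (z / 2) * (g z - g (-z)) := by
      simp only [hf, hodd]
      ring
    rw [hexp]
    rcases le_or_gt 0 z with hz | hz
    · have h1 : g (-z) ≤ g z := by
        simp only [hg]
        apply Real.exp_le_exp.2
        apply div_le_div_of_nonneg_right _ (by positivity)
        · nlinarith
      exact mul_nonneg (tanh_nonneg' (by linarith)) (by linarith)
    · have h1 : g z ≤ g (-z) := by
        simp only [hg]
        apply Real.exp_le_exp.2
        apply div_le_div_of_nonneg_right _ (by positivity)
        · nlinarith
      have h2 : Real.tanh (z / 2) ≤ 0 := by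
        have := tanh_pos' (show 0 < -z/2 by linarith)
        rw [neg_div, Real.tanh_neg] at this
        linarith
      nlinarith [mul_nonneg (neg_nonneg.2 h2) (sub_nonneg.2 h1)]
  have hFpos : ∀ z, 0 < z → 0 < f z + f (-z) := by
    intro z hz
    have hodd : Real.tanh (-z / 2) = -Real.tanh (z / 2) := by
      rw [neg_div, Real.tanh_neg]
    have hexp : f z + f (-z) = Real.tanh (z / 2) * (g z - g (-z)) := by
      simp only [hf, hodd]; ring
    rw [hexp]
    have h1 : g (-z) < g z := by
      simp only [hg]
      apply Real.exp_lt_exp.2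
      rw [div_lt_div_iff₀ (by positivity) (by positivity)]
      nlinarith [mul_pos hz ht]
    exact mul_pos (tanh_pos' (by linarith)) (by linarith)
  have hFi : Integrable (fun z => f z + f (-z)) := hfi.add hfneg
  have hFint : 0 < ∫ z, (f z + f (-z)) := by
    rw [integral_pos_iff_support_of_nonneg hFnn hFi]
    have hsub : Set.Ioi (0:ℝ) ⊆ Function.support (fun z => f z + f (-z)) := by
      intro z hz
      exact (hFpos z hz).ne'
    calc (0:ENNReal) < volume (Set.Ioi (0:ℝ)) := by simp
      _ ≤ volume (Function.support (fun z => f z + f (-z))) := measure_mono hsub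
  have hfpos : 0 < ∫ z, f z := by
    have := integral_add hfi hfneg
    rw [this, hintneg] at hFint
    linarith
  -- assemble
  have key1 : 0 < (Real.sqrt (4 * Real.pi * t))⁻¹ * ∫ z, f z := mul_pos hc hfpos
  have key2 : (Real.sqrt (4 * Real.pi * t))⁻¹ * (∫ z, f z) < 1 := by
    have := mul_lt_mul_of_pos_left hflt hc
    rwa [hgint, inv_mul_cancel₀ hs.ne'] at this
  have hI : (∫ z : ℝ, Real.tanh (z / 2) * Real.exp (-(z - t) ^ 2 / (4 * t))) = ∫ z, f z := rfl
  have hphi : phiGA t = 1 - (Real.sqrt (4 * Real.pi * t))⁻¹ * ∫ z, f z := by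
    rw [phiGA, if_neg ht.ne', hI]
  constructor
  · rw [hphi]; constructor <;> linarith
  · rw [hI]; exact ⟨key1, key2⟩
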